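/- arXiv:2512.15709 — 3 statements merged into one kernel-verified Lean document; each statement's English description precedes it below -/
import Mathlib

section
/- Let (a_n)_{n ≥ 1} be complex numbers and σ ∈ ℝ such that ∑_{n ≥ 1} |a_n| n^{−σ} < ∞. Let φ : ℝ → ℂ be integrable. Then for every x > 0 and every T > 0, (1/(2πT)) · ∫_ℝ φ(t/T) · (∑_{n ≥ 1} a_n n^{−(σ+it)}) · x^{σ+it} dt = (1/(2π)) · ∑_{n ≥ 1} a_n (x/n)^σ · φ̂((T/(2π))·log(n/x)). -/
open Real MeasureTheory
open scoped FourierTransform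

lemma abs_exp_mul_I' (t r : ℝ) : ‖Complex.exp ((t : ℂ) * (r : ℂ) * Complex.I)‖ = 1 := by
  rw [Complex.norm_exp]
  simp

lemma key_pow (σ t : ℝ) {x y : ℝ} (hx : 0 < x) (hy : 0 < y) :
    ((y : ℝ) : ℂ) ^ (-((σ : ℂ) + t * Complex.I)) * ((x : ℝ) : ℂ) ^ ((σ : ℂ) + t * Complex.I)
      = (((x / y) ^ σ : ℝ) : ℂ) * Complex.exp (t * Real.log (x / y) * Complex.I) := by
  rw [Complex.cpow_def_of_ne_zero (by exact_mod_cast hy.ne'),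
      Complex.cpow_def_of_ne_zero (by exact_mod_cast hx.ne'),
      ← Complex.exp_add, ← Complex.ofReal_log hy.le, ← Complex.ofReal_log hx.le,
      Real.rpow_def_of_pos (div_pos hx hy), Complex.ofReal_exp, ← Complex.exp_add]
  congr 1
  rw [Real.log_div hx.ne' hy.ne']
  push_cast
  ring

theorem stmt_4 (a : ℕ → ℂ) (ha0 : a 0 = 0) (σ : ℝ)
    (hsum : Summable fun n : ℕ => ‖a n‖ * (n : ℝ) ^ (-σ))
    (φ : ℝ → ℂ) (hφ : Integrable φ)
    (x T : ℝ) (hx : 0 < x) (hT : 0 < T) :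
    (1 / (2 * π * T) : ℂ) *
        ∫ t : ℝ, φ (t / T) * (∑' n : ℕ, a n * (n : ℂ) ^ (-((σ : ℂ) + t * Complex.I)))
          * (x : ℂ) ^ ((σ : ℂ) + t * Complex.I)
      = (1 / (2 * π) : ℂ) *
          ∑' n : ℕ, a n * (((x / (n : ℝ)) ^ σ : ℝ) : ℂ)
            * 𝓕 φ (T / (2 * π) * Real.log ((n : ℝ) / x)) := by
  set f : ℕ → ℝ → ℂ := fun n t =>
    φ (t / T) * (a n * (n : ℂ) ^ (-((σ : ℂ) + t * Complex.I)))
      * (x : ℂ) ^ ((σ : ℂ) + t * Complex.I) with hf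
  -- rewrite f n for n ≠ 0
  have hfe : ∀ (n : ℕ), n ≠ 0 → ∀ t : ℝ, f n t
      = (a n * (((x / (n : ℝ)) ^ σ : ℝ) : ℂ)) *
        (Complex.exp (t * Real.log (x / (n : ℝ)) * Complex.I) * φ (t / T)) := by
    intro n hn t
    have hn' : (0 : ℝ) < (n : ℝ) := by positivity
    simp only [hf]
    rw [mul_assoc, mul_assoc, show ((n : ℂ)) = (((n : ℝ) : ℝ) : ℂ) by push_cast; ring,
      show ((x : ℂ)) = (((x : ℝ) : ℝ) : ℂ) from rfl]
    rw [key_pow σ t hx hn']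
    ring
  have hf0 : ∀ t : ℝ, f 0 t = 0 := by intro t; simp [hf, ha0]
  -- integrability of each f n
  have hint : ∀ n : ℕ, Integrable (f n) := by
    intro n
    rcases eq_or_ne n 0 with rfl | hn
    · simp only [funext hf0]; exact integrable_zero _ _ _
    · have h1 : Integrable (fun t : ℝ => φ (t / T)) := hφ.comp_div hT.ne'
      have h2 : Integrable (fun t : ℝ =>
          Complex.exp (t * Real.log (x / (n : ℝ)) * Complex.I) * φ (t / T)) := by
        apply h1.bdd_mul (c := 1)
        · exact (Complex.continuous_exp.comp (by continuity)).aestronglyMeasurable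
        · exact Filter.Eventually.of_forall fun t => le_of_eq (abs_exp_mul_I' t _)
      have := (h2.const_mul (a n * (((x / (n : ℝ)) ^ σ : ℝ) : ℂ)))
      exact this.congr (Filter.Eventually.of_forall fun t => (hfe n hn t).symm)
  -- norm integral computation
  have hnorm : ∀ n : ℕ, (∫ t : ℝ, ‖f n t‖)
      = (‖a n‖ * (n : ℝ) ^ (-σ)) * (x ^ σ * (T * ∫ u : ℝ, ‖φ u‖)) := by
    intro n
    rcases eq_or_ne n 0 with rfl | hn
    · simp [funext hf0, ha0]
    · have hn' : (0 : ℝ) < (n : ℝ) := by positivity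
      have : ∀ t : ℝ, ‖f n t‖ = (‖a n‖ * ((x / (n : ℝ)) ^ σ)) * ‖φ (t / T)‖ := by
        intro t
        rw [hfe n hn t]
        rw [norm_mul, norm_mul, norm_mul, abs_exp_mul_I', Complex.norm_real,
          Real.norm_of_nonneg (Real.rpow_nonneg (by positivity : (0:ℝ) ≤ x / (n:ℝ)) σ)]
        ring
      simp_rw [this]
      rw [MeasureTheory.integral_const_mul, MeasureTheory.Measure.integral_comp_div (fun u => ‖φ u‖) T,
        abs_of_pos hT, smul_eq_mul]
      rw [Real.div_rpow hx.le hn'.le, Real.rpow_neg hn'.le]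
      field_simp
  have hsummable : Summable fun n : ℕ => ∫ t : ℝ, ‖f n t‖ := by
    simp_rw [hnorm]
    exact hsum.mul_right _
  -- swap integral and sum
  have hswap : (∫ t : ℝ, φ (t / T) * (∑' n : ℕ, a n * (n : ℂ) ^ (-((σ : ℂ) + t * Complex.I)))
          * (x : ℂ) ^ ((σ : ℂ) + t * Complex.I)) = ∑' n : ℕ, ∫ t : ℝ, f n t := by
    rw [integral_tsum_of_summable_integral_norm hint hsummable]
    congr 1
    funext t
    rw [← tsum_mul_left, ← tsum_mul_right]
  -- evaluate each integral
  have heval : ∀ n : ℕ, (∫ t : ℝ, f n t)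
      = (T : ℂ) * (a n * (((x / (n : ℝ)) ^ σ : ℝ) : ℂ)
          * 𝓕 φ (T / (2 * π) * Real.log ((n : ℝ) / x))) := by
    intro n
    rcases eq_or_ne n 0 with rfl | hn
    · simp [funext hf0, ha0]
    · have hn' : (0 : ℝ) < (n : ℝ) := by positivity
      set L : ℝ := Real.log (x / (n : ℝ)) with hL
      have hg : ∀ t : ℝ, Complex.exp (t * L * Complex.I) * φ (t / T)
          = (fun u : ℝ => Complex.exp (T * u * L * Complex.I) * φ u) (t / T) := by
        intro t
        simp only
        have h : (T : ℂ) * ((t / T : ℝ) : ℂ) = (t : ℂ) := by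
          push_cast
          rw [mul_comm]
          exact div_mul_cancel₀ _ (show (T:ℂ) ≠ 0 by exact_mod_cast hT.ne')
        rw [h]
      calc (∫ t : ℝ, f n t)
          = (a n * (((x / (n : ℝ)) ^ σ : ℝ) : ℂ)) *
            ∫ t : ℝ, (fun u : ℝ => Complex.exp (T * u * L * Complex.I) * φ u) (t / T) := by
            rw [← MeasureTheory.integral_const_mul]
            congr 1; funext t; rw [hfe n hn t, ← hg t]
        _ = (a n * (((x / (n : ℝ)) ^ σ : ℝ) : ℂ)) *
            ((T : ℂ) * ∫ u : ℝ, Complex.exp (T * u * L * Complex.I) * φ u) := by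
            rw [MeasureTheory.Measure.integral_comp_div
              (fun u : ℝ => Complex.exp (T * u * L * Complex.I) * φ u) T, abs_of_pos hT]
            simp [smul_eq_mul]
        _ = (T : ℂ) * (a n * (((x / (n : ℝ)) ^ σ : ℝ) : ℂ)
            * 𝓕 φ (T / (2 * π) * Real.log ((n : ℝ) / x))) := by
            rw [Real.fourier_real_eq_integral_exp_smul]
            have : ∀ v : ℝ, Complex.exp (↑(-2 * π * v * (T / (2 * π) * Real.log ((n : ℝ) / x)))
                * Complex.I) • φ v = Complex.exp (T * v * L * Complex.I) * φ v := by
              intro v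
              rw [smul_eq_mul]
              congr 2
              have hlog : Real.log ((n : ℝ) / x) = -L := by
                rw [hL, ← Real.log_inv, inv_div]
              have hπ : (π : ℝ) ≠ 0 := Real.pi_ne_zero
              rw [show (-2 * π * v * (T / (2 * π) * Real.log ((n : ℝ) / x)) : ℝ)
                  = T * v * L from by rw [hlog]; field_simp]
              push_cast
              ring
            rw [← funext this]
            ring
  rw [hswap]
  simp_rw [heval]
  rw [tsum_mul_left]
  rw [← mul_assoc]
  congr 1
  have hπ : (π : ℂ) ≠ 0 := by exact_mod_cast Real.pi_ne_zero
  have hT' : (T : ℂ) ≠ 0 := by exact_mod_cast hT.ne'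
  field_simp
end

section
/- Let φ : ℝ → ℂ be such that both φ and its Fourier transform φ̂ are integrable. Let T > 0 and ε > 0, and define Φ(t) = φ(t)/(iTt + ε). Then for every ξ ∈ ℝ, the Fourier transform of Φ satisfies Φ̂(ξ) = (2π/T) · ∫_ξ^∞ e^{−2π(y−ξ)ε/T} · φ̂(y) dy. -/
open Real MeasureTheory
open scoped FourierTransform

lemma cexp_integrableOn (c : ℂ) (hc : 0 < c.re) (ξ : ℝ) :
    IntegrableOn (fun s : ℝ => Complex.exp (-(c * s))) (Set.Ioi ξ) := by
  apply Integrable.mono' (exp_neg_integrableOn_Ioi ξ hc)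
  · exact (Complex.continuous_exp.comp (by continuity)).aestronglyMeasurable
  · filter_upwards with s
    rw [Complex.norm_exp]
    simp [neg_mul]

lemma integral_cexp_Ioi (c : ℂ) (hc : 0 < c.re) (ξ : ℝ) :
    ∫ s in Set.Ioi ξ, Complex.exp (-(c * s)) = Complex.exp (-(c * ξ)) / c := by
  have hc0 : c ≠ 0 := fun h => by simp [h] at hc
  have hderiv : ∀ x ∈ Set.Ici ξ, HasDerivAt (fun s : ℝ => -c⁻¹ * Complex.exp (-(c * s)))
      (Complex.exp (-(c * x))) x := by
    intro x _
    have h1 : HasDerivAt (fun s : ℝ => -(c * s)) (-c) x := by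
      have h := ((Complex.ofRealCLM.hasDerivAt (x := x)).const_mul c).neg
      simp at h
      exact h
    have := (h1.cexp).const_mul (-c⁻¹)
    convert this using 1
    · rfl
    field_simp
  have htend : Filter.Tendsto (fun s : ℝ => -c⁻¹ * Complex.exp (-(c * s)))
      Filter.atTop (nhds 0) := by
    rw [show (0 : ℂ) = -c⁻¹ * 0 by ring]
    apply Filter.Tendsto.const_mul
    rw [tendsto_zero_iff_norm_tendsto_zero]
    have : ∀ s : ℝ, ‖Complex.exp (-(c * s))‖ = Real.exp (-(c.re * s)) := by
      intro s
      rw [Complex.norm_exp]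
      simp [neg_mul]
    simp_rw [this]
    have h1 : Filter.Tendsto (fun s : ℝ => c.re * s) Filter.atTop Filter.atTop :=
      Filter.Tendsto.const_mul_atTop hc Filter.tendsto_id
    exact Real.tendsto_exp_atBot.comp (Filter.tendsto_neg_atTop_atBot.comp h1)
  rw [integral_Ioi_of_hasDerivAt_of_tendsto' hderiv (cexp_integrableOn c hc ξ) htend]
  field_simp
  ring

theorem stmt_5 (φ : ℝ → ℂ) (hφ : Integrable φ) (hφhat : Integrable (𝓕 φ))
    (T ε : ℝ) (hT : 0 < T) (hε : 0 < ε) (ξ : ℝ) :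
    𝓕 (fun t : ℝ => φ t / (Complex.I * T * t + ε)) ξ
      = ((2 * π / T : ℝ) : ℂ) *
          ∫ y in Set.Ici ξ, (Real.exp (-(2 * π * (y - ξ) * ε / T)) : ℂ) * 𝓕 φ y := by
  have hTC : (T:ℂ) ≠ 0 := Complex.ofReal_ne_zero.mpr hT.ne'
  have hk : ((2*π/T : ℝ):ℂ) ≠ 0 := Complex.ofReal_ne_zero.mpr (by positivity)
  set G : ℝ → ℂ := Set.indicator (Set.Ici ξ)
    (fun y : ℝ => ((2*π/T : ℝ):ℂ) * (Real.exp (-(2 * π * (y - ξ) * ε / T)) : ℂ)) with hG_def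
  -- integrability of G
  have hGint : Integrable G := by
    rw [hG_def, integrable_indicator_iff measurableSet_Ici]
    have hb : 0 < 2*π*ε/T := by positivity
    have h1 : IntegrableOn (fun y : ℝ => Real.exp (-(2*π*(y-ξ)*ε/T))) (Set.Ici ξ) := by
      rw [integrableOn_Ici_iff_integrableOn_Ioi]
      refine ((exp_neg_integrableOn_Ioi ξ hb).const_mul (Real.exp (2*π*ξ*ε/T))).congr
        (Filter.Eventually.of_forall fun y => ?_)
      simp only [← Real.exp_add]
      congr 1
      field_simp
      ring
    exact (h1.ofReal).const_mul _
  -- Fourier transform of G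
  have hGhat : ∀ t : ℝ, 𝓕 G t
      = Complex.exp (((2 * π * (-(t * ξ)) : ℝ)) * Complex.I) / (Complex.I * T * t + ε) := by
    intro t
    set c : ℂ := ((2*π*ε/T : ℝ) : ℂ) + ((2*π*t : ℝ) : ℂ)*Complex.I with hc_def
    have hcre : 0 < c.re := by simp [hc_def]; positivity
    have hD : (Complex.I * T * t + ε) ≠ 0 := by
      intro h
      have := congrArg Complex.re h
      simp [Complex.add_re, Complex.mul_re] at this
      linarith
    have hcD : c = ((2*π/T : ℝ):ℂ) * (Complex.I * T * t + ε) := by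
      rw [hc_def]; push_cast; field_simp; ring
    rw [hG_def, Real.fourier_real_eq]
    have hpt : (fun y : ℝ => 𝐞 (-(y * t)) • (Set.indicator (Set.Ici ξ)
          (fun y : ℝ => ((2*π/T : ℝ):ℂ) * (Real.exp (-(2 * π * (y - ξ) * ε / T)) : ℂ)) y))
        = Set.indicator (Set.Ici ξ)
          (fun y => (Complex.exp ((2*π*ε/T*ξ : ℝ):ℂ) * ((2*π/T : ℝ):ℂ))
            * Complex.exp (-(c * y))) := by
      funext y
      by_cases hy : y ∈ Set.Ici ξ
      · rw [Set.indicator_of_mem hy, Set.indicator_of_mem hy, Circle.smul_def,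
          Real.fourierChar_apply]
        simp only [Complex.ofReal_exp, smul_eq_mul]
        have key : Complex.exp (((2 * π * -(y * t) : ℝ) : ℂ) * Complex.I)
              * Complex.exp (((-(2 * π * (y - ξ) * ε / T)) : ℝ) : ℂ)
            = Complex.exp (((2*π*ε/T*ξ : ℝ):ℂ)) * Complex.exp (-(c * y)) := by
          rw [← Complex.exp_add, ← Complex.exp_add]
          congr 1
          rw [hc_def]; push_cast; field_simp; ring
        linear_combination ((2*π/T : ℝ):ℂ) * key
      · rw [Set.indicator_of_notMem hy, Set.indicator_of_notMem hy, smul_zero]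
    rw [hpt, integral_indicator measurableSet_Ici,
      MeasureTheory.integral_Ici_eq_integral_Ioi, MeasureTheory.integral_const_mul,
      integral_cexp_Ioi c hcre ξ, hcD]
    have h2 : Complex.exp (((2*π*ε/T*ξ : ℝ):ℂ))
          * Complex.exp (-(((2*π/T : ℝ):ℂ) * (Complex.I * T * t + ε) * ξ))
        = Complex.exp (((2 * π * (-(t * ξ)) : ℝ)) * Complex.I) := by
      rw [← Complex.exp_add]
      congr 1
      push_cast
      field_simp
      ring
    have haux : ∀ (a b k D : ℂ), k ≠ 0 → D ≠ 0 → a * k * (b / (k * D)) = a * b / D := by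
      intros a b k D hk hD
      field_simp
    rw [haux _ _ _ _ hk hD, h2]
  -- multiplication formula
  have hmul : ∫ y, 𝓕 φ y • G y = ∫ x, φ x • 𝓕 G x := by
    have hflip : (innerₗ ℝ).flip = innerₗ ℝ :=
      LinearMap.ext fun x => LinearMap.ext fun y => real_inner_comm x y
    have := VectorFourier.integral_fourierIntegral_smul_eq_flip (e := Real.fourierChar)
      (L := innerₗ ℝ) (μ := volume) (ν := volume) Real.continuous_fourierChar
      continuous_inner hφ hGint
    rw [hflip] at this
    exact this
  -- left-hand side
  have hLHS : 𝓕 (fun t : ℝ => φ t / (Complex.I * T * t + ε)) ξ = ∫ t, φ t • 𝓕 G t := by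
    rw [Real.fourier_real_eq]
    congr 1
    funext t
    rw [hGhat t, Circle.smul_def, Real.fourierChar_apply, smul_eq_mul, smul_eq_mul]
    ring
  rw [hLHS, ← hmul]
  have hind : (fun y => 𝓕 φ y • G y) = Set.indicator (Set.Ici ξ)
      (fun y => ((2*π/T : ℝ):ℂ)
        * ((Real.exp (-(2 * π * (y - ξ) * ε / T)) : ℂ) * 𝓕 φ y)) := by
    funext y
    rw [hG_def]
    by_cases hy : y ∈ Set.Ici ξ
    · rw [Set.indicator_of_mem hy, Set.indicator_of_mem hy, smul_eq_mul]
      ring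
    · rw [Set.indicator_of_notMem hy, Set.indicator_of_notMem hy, smul_zero]
  rw [hind, integral_indicator measurableSet_Ici, integral_const_mul]
end

section
/- For every complex z ≠ 0 with |Im z| ≤ π/4, one has |cosh(z)/sinh(z) − z/(sinh z)^2| < 1; and for every complex z ≠ 0 with |Im z| ≤ π/2, one has |cosh(z)/sinh(z) − z/(sinh z)^2| ≤ |z|. (Here coth z − z·csch^2 z is the derivative of z·coth z, which is regular at 0.) -/
open Real

/-- Monotone helper on [0,∞). -/
lemma nonneg_of_deriv_nonneg (f f' : ℝ → ℝ) (hd : ∀ x, HasDerivAt f (f' x) x)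
    (h0 : f 0 = 0) (h' : ∀ x, 0 ≤ x → 0 ≤ f' x) :
    ∀ x, 0 ≤ x → 0 ≤ f x := by
  intro x hx
  have hm : MonotoneOn f (Set.Ici 0) := by
    apply monotoneOn_of_deriv_nonneg (convex_Ici 0)
      (fun t _ => (hd t).continuousAt.continuousWithinAt)
    · intro t ht
      exact ((hd t).differentiableAt).differentiableWithinAt
    · intro t ht
      rw [interior_Ici] at ht
      rw [(hd t).deriv]
      exact h' t (le_of_lt ht)
  have := hm (Set.self_mem_Ici) (Set.mem_Ici.2 hx) hx
  linarith [h0 ▸ this]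

/-- Monotone helper on [0,b]. -/
lemma nonneg_of_deriv_nonneg_Icc (f f' : ℝ → ℝ) (b : ℝ) (hd : ∀ x, HasDerivAt f (f' x) x)
    (h0 : f 0 = 0) (h' : ∀ x, 0 ≤ x → x ≤ b → 0 ≤ f' x) :
    ∀ x, 0 ≤ x → x ≤ b → 0 ≤ f x := by
  intro x hx hxb
  have hm : MonotoneOn f (Set.Icc 0 b) := by
    apply monotoneOn_of_deriv_nonneg (convex_Icc 0 b)
      (fun t _ => (hd t).continuousAt.continuousWithinAt)
    · intro t ht
      exact ((hd t).differentiableAt).differentiableWithinAt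
    · intro t ht
      rw [interior_Icc] at ht
      rw [(hd t).deriv]
      exact h' t ht.1.le ht.2.le
  have := hm (Set.left_mem_Icc.2 (hx.trans hxb)) (Set.mem_Icc.2 ⟨hx, hxb⟩) hx
  linarith [h0 ▸ this]

lemma sin_ge_taylor : ∀ x : ℝ, 0 ≤ x → x - x^3/6 ≤ sin x := by
  have := nonneg_of_deriv_nonneg (fun x => sin x - x + x^3/6) (fun x => cos x - 1 + x^2/2)
    (fun x => by
      have h1 : HasDerivAt Real.sin (cos x) x := Real.hasDerivAt_sin x
      have h2 : HasDerivAt (fun x : ℝ => x^3/6) (x^2/2) x := by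
        have := (hasDerivAt_pow 3 x).div_const 6
        exact this.congr_deriv (by push_cast; ring)
      exact (h1.sub (hasDerivAt_id x)).add h2)
    (by simp)
    (fun x hx => by nlinarith [Real.one_sub_sq_div_two_le_cos (x := x)])
  intro x hx; have := this x hx; linarith

lemma cos_le_taylor : ∀ x : ℝ, 0 ≤ x → cos x ≤ 1 - x^2/2 + x^4/24 := by
  have := nonneg_of_deriv_nonneg (fun x => 1 - x^2/2 + x^4/24 - cos x)
    (fun x => -x + x^3/6 + sin x)
    (fun x => by
      have h1 : HasDerivAt Real.cos (-sin x) x := Real.hasDerivAt_cos x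
      have h2 : HasDerivAt (fun x : ℝ => x^2/2) x x := by
        have := (hasDerivAt_pow 2 x).div_const 2
        exact this.congr_deriv (by push_cast; ring)
      have h3 : HasDerivAt (fun x : ℝ => x^4/24) (x^3/6) x := by
        have := (hasDerivAt_pow 4 x).div_const 24
        exact this.congr_deriv (by push_cast; ring)
      have := (((hasDerivAt_const x (1:ℝ)).sub h2).add h3).sub h1
      exact this.congr_deriv (by ring))
    (by norm_num)
    (fun x hx => by nlinarith [sin_ge_taylor x hx])
  intro x hx; have := this x hx; linarith

lemma sin_le_taylor : ∀ x : ℝ, 0 ≤ x → sin x ≤ x - x^3/6 + x^5/120 := by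
  have := nonneg_of_deriv_nonneg (fun x => x - x^3/6 + x^5/120 - sin x)
    (fun x => 1 - x^2/2 + x^4/24 - cos x)
    (fun x => by
      have h1 : HasDerivAt Real.sin (cos x) x := Real.hasDerivAt_sin x
      have h2 : HasDerivAt (fun x : ℝ => x^3/6) (x^2/2) x := by
        have := (hasDerivAt_pow 3 x).div_const 6
        exact this.congr_deriv (by push_cast; ring)
      have h3 : HasDerivAt (fun x : ℝ => x^5/120) (x^4/24) x := by
        have := (hasDerivAt_pow 5 x).div_const 120
        exact this.congr_deriv (by push_cast; ring)
      have := (((hasDerivAt_id x).sub h2).add h3).sub h1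
      exact this.congr_deriv (by ring))
    (by norm_num)
    (fun x hx => by nlinarith [cos_le_taylor x hx])
  intro x hx; have := this x hx; linarith

lemma cos_ge_taylor : ∀ x : ℝ, 0 ≤ x → 1 - x^2/2 + x^4/24 - x^6/720 ≤ cos x := by
  have := nonneg_of_deriv_nonneg (fun x => cos x - (1 - x^2/2 + x^4/24 - x^6/720))
    (fun x => -sin x + (x - x^3/6 + x^5/120))
    (fun x => by
      have h1 : HasDerivAt Real.cos (-sin x) x := Real.hasDerivAt_cos x
      have h2 : HasDerivAt (fun x : ℝ => 1 - x^2/2 + x^4/24 - x^6/720)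
          (-x + x^3/6 - x^5/120) x := by
        have p2 := (hasDerivAt_pow 2 x).div_const 2
        have p4 := (hasDerivAt_pow 4 x).div_const 24
        have p6 := (hasDerivAt_pow 6 x).div_const 720
        have := (((hasDerivAt_const x (1:ℝ)).sub p2).add p4).sub p6
        exact this.congr_deriv (by push_cast; ring)
      have := h1.sub h2
      exact this.congr_deriv (by ring))
    (by norm_num)
    (fun x hx => by nlinarith [sin_le_taylor x hx])
  intro x hx; have := this x hx; linarith

lemma sinh_le_mul_cosh : ∀ x : ℝ, 0 ≤ x → sinh x ≤ x * cosh x := by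
  have := nonneg_of_deriv_nonneg (fun x => x * cosh x - sinh x) (fun x => x * sinh x)
    (fun x => by
      have h1 : HasDerivAt (fun x : ℝ => x * cosh x) (cosh x + x * sinh x) x := by
        have := (hasDerivAt_id x).mul (Real.hasDerivAt_cosh x)
        exact this.congr_deriv (by simp only [id_eq]; ring)
      have := h1.sub (Real.hasDerivAt_sinh x)
      exact this.congr_deriv (by ring))
    (by simp)
    (fun x hx => mul_nonneg hx (by positivity))
  intro x hx; have h := this x hx; linarith

lemma mul_sinh_ge : ∀ x : ℝ, 2 * (cosh x - 1) ≤ x * sinh x := by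
  have key : ∀ x : ℝ, 0 ≤ x → 2 * (cosh x - 1) ≤ x * sinh x := by
    intro x hx
    have h1 : cosh x = 2 * sinh (x/2)^2 + 1 := by
      have := Real.cosh_two_mul (x/2)
      have h2 := Real.cosh_sq (x/2)
      rw [show 2 * (x/2) = x by ring] at this
      linarith
    have h2 : sinh x = 2 * sinh (x/2) * cosh (x/2) := by
      have := Real.sinh_two_mul (x/2)
      rwa [show 2 * (x/2) = x by ring] at this
    have h3 : sinh (x/2) ≤ (x/2) * cosh (x/2) := sinh_le_mul_cosh (x/2) (by linarith)
    have h4 : 0 ≤ sinh (x/2) := by simpa using Real.sinh_le_sinh.2 (by linarith : (0:ℝ) ≤ x/2)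
    nlinarith
  intro x
  rcases le_or_gt 0 x with hx | hx
  · exact key x hx
  · have := key (-x) (by linarith)
    simpa using this

lemma cosh_gt_sq : ∀ x : ℝ, x ≠ 0 → x^2/2 < cosh x - 1 := by
  have key : ∀ x : ℝ, 0 < x → x^2/2 < cosh x - 1 := by
    intro x hx
    have h1 : cosh x = 2 * sinh (x/2)^2 + 1 := by
      have := Real.cosh_two_mul (x/2)
      have h2 := Real.cosh_sq (x/2)
      rw [show 2 * (x/2) = x by ring] at this
      linarith
    have h3 : x/2 < sinh (x/2) := Real.self_lt_sinh_iff.2 (by linarith)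
    nlinarith
  intro x hx
  rcases lt_trichotomy x 0 with h | h | h
  · have := key (-x) (by linarith); simpa using this
  · exact absurd h hx
  · exact key x h

lemma v_sin_add_cos : ∀ v : ℝ, 0 ≤ v → v ≤ π/2 → 1 ≤ v * sin v + cos v := by
  intro v hv hv2
  have h1 : cos v = 1 - 2 * sin (v/2)^2 := by
    have := Real.cos_sq' (v/2)
    have h := Real.cos_two_mul (v/2)
    rw [show 2 * (v/2) = v by ring] at h
    have hs := Real.sin_sq_add_cos_sq (v/2)
    nlinarith
  have h2 : sin v = 2 * sin (v/2) * cos (v/2) := by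
    have := Real.sin_two_mul (v/2)
    rwa [show 2 * (v/2) = v by ring] at this
  have h3 : sin (v/2) ≤ v/2 := Real.sin_le (by linarith)
  have h4 : 0 ≤ sin (v/2) := Real.sin_nonneg_of_nonneg_of_le_pi (by linarith)
    (by linarith [Real.pi_pos])
  have h5 : (1:ℝ)/2 ≤ cos (v/2) := by
    have := Real.cos_pi_div_three
    have hm : cos (π/3) ≤ cos (v/2) := by
      apply Real.cos_le_cos_of_nonneg_of_le_pi (by linarith) (by linarith [Real.pi_pos])
      linarith [Real.pi_pos]
    linarith
  have h6 : sin (v/2) ≤ v * cos (v/2) := by nlinarith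
  nlinarith [mul_nonneg h4 (by linarith : (0:ℝ) ≤ v * cos (v/2) - sin (v/2))]

lemma sin_ge_mul_cos : ∀ y : ℝ, 0 ≤ y → y ≤ π → y * cos y ≤ sin y := by
  have := nonneg_of_deriv_nonneg_Icc (fun y => sin y - y * cos y) (fun y => y * sin y) π
    (fun y => by
      have h1 : HasDerivAt (fun y : ℝ => y * cos y) (cos y + y * (-sin y)) y := by
        have := (hasDerivAt_id y).mul (Real.hasDerivAt_cos y)
        exact this.congr_deriv (by simp only [id_eq]; ring)
      have := (Real.hasDerivAt_sin y).sub h1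
      exact this.congr_deriv (by ring))
    (by simp)
    (fun y hy hyp => mul_nonneg hy (Real.sin_nonneg_of_nonneg_of_le_pi hy hyp))
  intro y hy hyp; have h := this y hy hyp; linarith

lemma g_pos : ∀ v : ℝ, 0 < v → v ≤ π/2 → 0 < 2*v*sin v + 2*cos v^2 - 2*cos v - v^2 := by
  intro v hv hv2
  have hc2 : cos v ^ 2 = 1/2 + cos (2*v) / 2 := Real.cos_sq v
  have t1 := sin_ge_taylor v hv.le
  have t2 := cos_le_taylor v hv.le
  have t3 := cos_ge_taylor (2*v) (by linarith)
  have hpi : π < 3.15 := Real.pi_lt_d2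
  have hv16 : v < 1.6 := by linarith
  have hprod : 0 ≤ 2*v * (sin v - (v - v^3/6)) := mul_nonneg (by linarith) (by linarith)
  have hsmall : 0 < 1/4 - 4*v^2/45 := by nlinarith
  nlinarith [mul_pos (pow_pos hv 4) hsmall]

lemma core_pos : ∀ a b : ℝ, 0 ≤ a → 0 ≤ b → b ≤ π/2 → (0 < a ∨ 0 < b) →
    0 < 2*a*sinh a*cos b + 2*b*cosh a*sin b + 2*cos b^2 - 2*cos b*cosh a - a^2 - b^2 := by
  intro a b ha hb hb2 hab
  have hg : 0 ≤ 2*b*sin b + 2*cos b^2 - 2*cos b - b^2 := by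
    rcases eq_or_lt_of_le hb with h | h
    · simp [← h]
    · exact (g_pos b h hb2).le
  have h4 : 0 ≤ cos b := Real.cos_nonneg_of_mem_Icc ⟨by linarith, hb2⟩
  have h5 : 1 ≤ cosh a := Real.one_le_cosh a
  rcases eq_or_lt_of_le ha with h | h
  · -- a = 0
    have hb0 : 0 < b := by
      rcases hab with h' | h'
      · linarith
      · exact h'
    have := g_pos b hb0 hb2
    rw [← h]
    simp only [Real.sinh_zero, Real.cosh_zero]
    nlinarith
  · have h1 := v_sin_add_cos b hb hb2
    have h2 := mul_sinh_ge a
    have h3 := cosh_gt_sq a h.ne'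
    have P1 : 0 ≤ (cosh a - 1) * (b*sin b + cos b - 1) := mul_nonneg (by linarith) (by linarith)
    have P2 : 0 ≤ cos b * (a*sinh a - 2*(cosh a - 1)) := mul_nonneg h4 (by linarith)
    nlinarith [P1, P2]

lemma core1 (u v : ℝ) (hv : |v| ≤ π/2) (h : u ≠ 0 ∨ v ≠ 0) :
    (sinh u * cos v - u)^2 + (cosh u * sin v - v)^2 < (cosh u - cos v)^2 := by
  have hG : 0 < 2*u*sinh u*cos v + 2*v*cosh u*sin v + 2*cos v^2 - 2*cos v*cosh u - u^2 - v^2 := by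
    have e1 : |u| * sinh |u| = u * sinh u := by
      rcases abs_cases u with ⟨h', _⟩ | ⟨h', _⟩ <;> rw [h'] <;> simp [Real.sinh_neg]
    have e2 : cosh |u| = cosh u := Real.cosh_abs u
    have e3 : |v| * sin |v| = v * sin v := by
      rcases abs_cases v with ⟨h', _⟩ | ⟨h', _⟩ <;> rw [h'] <;> simp [Real.sin_neg]
    have e4 : cos |v| = cos v := Real.cos_abs v
    have := core_pos |u| |v| (abs_nonneg u) (abs_nonneg v) hv
      (by rcases h with h' | h'
          · exact Or.inl (abs_pos.2 h')
          · exact Or.inr (abs_pos.2 h'))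
    rw [e2, e4, sq_abs, sq_abs] at this
    calc (0:ℝ) < 2*(|u| * sinh |u|)*cos v + 2*(|v| * sin |v|)*cosh u + 2*cos v^2
        - 2*cos v*cosh u - u^2 - v^2 := by linarith [this]
      _ = _ := by rw [e1, e3]; ring
  have hid : (cosh u - cos v)^2 - ((sinh u * cos v - u)^2 + (cosh u * sin v - v)^2)
      = 2*u*sinh u*cos v + 2*v*cosh u*sin v + 2*cos v^2 - 2*cos v*cosh u - u^2 - v^2 := by
    linear_combination (cos v^2) * Real.cosh_sq_sub_sinh_sq u - (cosh u^2) * Real.sin_sq_add_cos_sq v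
  linarith

open intervalIntegral

lemma csinh (z : ℂ) : Complex.sinh z
    = (Real.sinh z.re * Real.cos z.im : ℝ) + (Real.cosh z.re * Real.sin z.im : ℝ) * Complex.I := by
  conv_lhs => rw [← Complex.re_add_im z]
  rw [Complex.sinh_add, Complex.sinh_mul_I, Complex.cosh_mul_I]
  push_cast
  ring

lemma ccosh (z : ℂ) : Complex.cosh z
    = (Real.cosh z.re * Real.cos z.im : ℝ) + (Real.sinh z.re * Real.sin z.im : ℝ) * Complex.I := by
  conv_lhs => rw [← Complex.re_add_im z]
  rw [Complex.cosh_add, Complex.sinh_mul_I, Complex.cosh_mul_I]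
  push_cast
  ring

lemma abs_sinh_sq (z : ℂ) :
    ‖Complex.sinh z‖ ^ 2 = Real.sinh z.re ^ 2 + Real.sin z.im ^ 2 := by
  rw [Complex.sq_norm, csinh, Complex.normSq_apply]
  simp only [Complex.add_re, Complex.add_im, Complex.ofReal_re, Complex.ofReal_im,
    Complex.mul_re, Complex.mul_im, Complex.I_re, Complex.I_im]
  ring_nf
  nlinarith [Real.sin_sq_add_cos_sq z.im, Real.cosh_sq_sub_sinh_sq z.re]

lemma sinh_ne_zero' (z : ℂ) (hz : z ≠ 0) (him : |z.im| ≤ π/2) : Complex.sinh z ≠ 0 := by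
  have hpos : 0 < Real.sinh z.re ^ 2 + Real.sin z.im ^ 2 := by
    rcases eq_or_ne z.re 0 with h | h
    · have hy : z.im ≠ 0 := by
        intro h'
        exact hz (Complex.ext h h')
      have habs := abs_le.1 him
      have : Real.sin z.im ≠ 0 := by
        rcases lt_trichotomy z.im 0 with h' | h' | h'
        · have : Real.sin z.im < 0 :=
            Real.sin_neg_of_neg_of_neg_pi_lt h' (by linarith [Real.pi_pos, habs.1])
          linarith
        · exact absurd h' hy
        · have : 0 < Real.sin z.im :=
            Real.sin_pos_of_pos_of_lt_pi h' (by linarith [Real.pi_pos, habs.2])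
          linarith
      positivity
    · have : Real.sinh z.re ≠ 0 := Real.sinh_ne_zero.2 h
      positivity
  intro h
  rw [← abs_sinh_sq z, h] at hpos
  simp at hpos

lemma part1_core (z : ℂ) (hz : z ≠ 0) (him : |z.im| ≤ π/4) :
    ‖Complex.sinh z * Complex.cosh z - z‖ < ‖Complex.sinh z‖ ^ 2 := by
  set x := z.re with hx
  set y := z.im with hy
  have hre : (Complex.sinh z * Complex.cosh z - z).re
      = sinh x * cosh x * (cos y^2 - sin y^2) - x := by
    rw [csinh, ccosh]
    simp only [Complex.sub_re, Complex.mul_re, Complex.mul_im, Complex.add_re, Complex.add_im,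
      Complex.ofReal_re, Complex.ofReal_im, Complex.I_re, Complex.I_im]
    ring
  have him' : (Complex.sinh z * Complex.cosh z - z).im
      = (sinh x^2 + cosh x^2) * (sin y * cos y) - y := by
    rw [csinh, ccosh]
    simp only [Complex.sub_im, Complex.mul_re, Complex.mul_im, Complex.add_re, Complex.add_im,
      Complex.ofReal_re, Complex.ofReal_im, Complex.I_re, Complex.I_im]
    ring
  have hS := abs_sinh_sq z
  have hSpos : 0 < Real.sinh x ^ 2 + Real.sin y ^ 2 := by
    have h1 : 0 < ‖Complex.sinh z‖ :=
      norm_pos_iff.2 (sinh_ne_zero' z hz (by linarith [Real.pi_pos]))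
    calc (0:ℝ) < ‖Complex.sinh z‖^2 := pow_pos h1 2
      _ = _ := hS
  rw [hS]
  apply lt_of_pow_lt_pow_left₀ 2 hSpos.le
  rw [Complex.sq_norm, Complex.normSq_apply, hre, him']
  -- apply core1 with u = 2x, v = 2y
  have huv : (2*x ≠ 0 ∨ 2*y ≠ 0) := by
    rcases eq_or_ne x 0 with h | h
    · right
      intro h'
      apply hz
      apply Complex.ext
      · exact h
      · simp only [Complex.zero_im]; linarith
    · left
      intro h'
      exact h (by linarith)
  have key := core1 (2*x) (2*y) (by rw [abs_mul]; simp; linarith [abs_nonneg y, him]) huv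
  rw [Real.sinh_two_mul, Real.cosh_two_mul, Real.sin_two_mul, Real.cos_two_mul'] at key
  have hRS : Real.cosh x^2 + Real.sinh x^2 - (Real.cos y^2 - Real.sin y^2)
      = 2*(Real.sinh x^2 + Real.sin y^2) := by
    linear_combination Real.cosh_sq_sub_sinh_sq x - Real.sin_sq_add_cos_sq y
  rw [hRS] at key
  nlinarith [key]

lemma sinh_mul_le (t : ℝ) (ht : 0 ≤ t) (ht1 : t ≤ 1) :
    ∀ a : ℝ, 0 ≤ a → sinh (t * a) ≤ t * sinh a := by
  have := nonneg_of_deriv_nonneg (fun a => t * sinh a - sinh (t * a))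
    (fun a => t * cosh a - t * cosh (t * a))
    (fun a => by
      have h0 : HasDerivAt (fun a : ℝ => t * a) t a := by
        simpa using (hasDerivAt_id a).const_mul t
      have h1 : HasDerivAt (fun a : ℝ => sinh (t * a)) (cosh (t * a) * t) a :=
        HasDerivAt.comp a (Real.hasDerivAt_sinh (t * a)) h0
      have h2 := ((Real.hasDerivAt_sinh a).const_mul t).sub h1
      exact h2.congr_deriv (by ring))
    (by simp)
    (fun a ha => by
      show (0:ℝ) ≤ t * cosh a - t * cosh (t * a)
      have : cosh (t * a) ≤ cosh a := by
        rw [Real.cosh_le_cosh]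
        rw [abs_of_nonneg (mul_nonneg ht ha), abs_of_nonneg ha]
        nlinarith
      nlinarith)
  intro a ha
  have h := this a ha
  linarith

lemma I1 (x : ℝ) : (∫ t in (0:ℝ)..1, Real.sinh (t * x) ^ 2) ≤ Real.sinh x ^ 2 / 2 := by
  have hInt1 : IntervalIntegrable (fun t : ℝ => Real.sinh (t * x) ^ 2) MeasureTheory.volume 0 1 :=
    ((Real.continuous_sinh.comp (continuous_id.mul continuous_const)).pow 2).intervalIntegrable 0 1
  have hInt2 : IntervalIntegrable (fun t : ℝ => t * Real.sinh x ^ 2) MeasureTheory.volume 0 1 :=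
    (continuous_id.mul continuous_const).intervalIntegrable 0 1
  have hle : (∫ t in (0:ℝ)..1, Real.sinh (t * x) ^ 2) ≤ ∫ t in (0:ℝ)..1, t * Real.sinh x ^ 2 := by
    apply intervalIntegral.integral_mono_on (by norm_num) hInt1 hInt2
    intro t ht
    have h1 : sinh (t * |x|) ≤ t * sinh |x| := sinh_mul_le t ht.1 ht.2 |x| (abs_nonneg x)
    have h2 : 0 ≤ sinh (t * |x|) := by
      simpa using Real.sinh_le_sinh.2 (mul_nonneg ht.1 (abs_nonneg x))
    have h3 : sinh (t * x) ^ 2 = sinh (t * |x|) ^ 2 := by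
      rcases abs_cases x with ⟨h, _⟩ | ⟨h, _⟩ <;> rw [h] <;> simp [mul_neg, Real.sinh_neg]
    have h4 : sinh x ^ 2 = sinh |x| ^ 2 := by
      rcases abs_cases x with ⟨h, _⟩ | ⟨h, _⟩ <;> rw [h] <;> simp [Real.sinh_neg]
    rw [h3, h4]
    have h5 : sinh (t*|x|)^2 ≤ (t * sinh |x|)^2 := by nlinarith
    nlinarith [mul_nonneg (mul_nonneg ht.1 (sq_nonneg (sinh |x|))) (sub_nonneg.2 ht.2)]
  have heval : (∫ t in (0:ℝ)..1, t * Real.sinh x ^ 2) = Real.sinh x ^ 2 / 2 := by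
    rw [intervalIntegral.integral_mul_const, integral_id]
    ring
  exact hle.trans heval.le

lemma I2 (y : ℝ) (hy : |y| ≤ π/2) :
    (∫ t in (0:ℝ)..1, Real.sin (t * y) ^ 2) ≤ Real.sin y ^ 2 / 2 := by
  have key : ∀ y : ℝ, 0 < y → y ≤ π/2 →
      (∫ t in (0:ℝ)..1, Real.sin (t * y) ^ 2) ≤ Real.sin y ^ 2 / 2 := by
    intro y hy0 hy2
    have hy4 : (0:ℝ) < 2 * y := by linarith
    have heval : (∫ t in (0:ℝ)..1, Real.sin (t * y) ^ 2)
        = 1/2 - Real.sin (2*y) / (2*(2*y)) := by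
      have h1 : ∀ t : ℝ, Real.sin (t * y) ^ 2 = 1/2 - Real.cos (t * (2*y)) / 2 := by
        intro t
        have := Real.cos_sq (t * y)
        rw [show 2 * (t * y) = t * (2 * y) by ring] at this
        have hs := Real.sin_sq_add_cos_sq (t * y)
        linarith
      rw [intervalIntegral.integral_congr (fun t _ => h1 t)]
      have h2 : (∫ t in (0:ℝ)..1, Real.cos (t * (2*y)))
          = (2*y)⁻¹ * (Real.sin (2*y)) := by
        rw [intervalIntegral.integral_comp_mul_right Real.cos hy4.ne']
        simp [integral_cos]
      have hc : Continuous fun t : ℝ => Real.cos (t * (2*y)) / 2 := by fun_prop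
      have h3 : (∫ t in (0:ℝ)..1, (1/2 - Real.cos (t * (2*y)) / 2))
          = 1/2 - (∫ t in (0:ℝ)..1, Real.cos (t * (2*y))) / 2 := by
        rw [intervalIntegral.integral_sub intervalIntegrable_const (hc.intervalIntegrable 0 1)]
        rw [intervalIntegral.integral_div]
        simp
      rw [h3, h2]
      ring
    rw [heval]
    have hcos : 0 ≤ Real.cos y := Real.cos_nonneg_of_mem_Icc ⟨by linarith, hy2⟩
    have hmul := sin_ge_mul_cos y hy0.le (by linarith [Real.pi_pos])
    have h2y : Real.sin (2*y) = 2 * Real.sin y * Real.cos y := Real.sin_two_mul y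
    have hpy : (1 - Real.sin y ^ 2)/2 ≤ Real.sin (2*y) / (2*(2*y)) := by
      rw [div_le_div_iff₀ (by norm_num) (by linarith)]
      have hid := Real.sin_sq_add_cos_sq y
      nlinarith [mul_nonneg (mul_nonneg hy0.le hcos) hcos,
        mul_nonneg hcos (sub_nonneg.2 hmul)]
    linarith
  rcases lt_trichotomy y 0 with h | h | h
  · have h1 : ∀ t : ℝ, Real.sin (t * y) ^ 2 = Real.sin (t * (-y)) ^ 2 := by
      intro t
      rw [mul_neg, Real.sin_neg]
      ring
    rw [intervalIntegral.integral_congr (fun t _ => h1 t)]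
    have h2 : Real.sin y ^ 2 = Real.sin (-y) ^ 2 := by rw [Real.sin_neg]; ring
    rw [h2]
    exact key (-y) (by linarith) (by rw [abs_of_neg h] at hy; linarith)
  · simp [h]
  · exact key y h (by rw [abs_of_pos h] at hy; linarith)

lemma key_int (z : ℂ) : Complex.sinh z * Complex.cosh z - z
    = ∫ t in (0:ℝ)..1, 2 * z * Complex.sinh (t * z) ^ 2 := by
  have hF : ∀ t : ℝ, HasDerivAt (fun s : ℝ => Complex.sinh (2 * s * z) / 2 - s * z)
      (2 * z * Complex.sinh (t * z) ^ 2) t := by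
    intro t
    have h1 : HasDerivAt (fun s : ℝ => (2 * (s:ℂ) * z)) (2 * z) t := by
      have h := ((Complex.ofRealCLM.hasDerivAt (x := t)).const_mul (2:ℂ)).mul_const z
      exact h.congr_deriv (by simp)
    have h2 : HasDerivAt (fun s : ℝ => Complex.sinh (2 * s * z))
        (Complex.cosh (2 * t * z) * (2 * z)) t :=
      by have h3 := (Complex.hasDerivAt_sinh (2 * (t:ℂ) * z)).comp t h1; exact h3
    have h4 : HasDerivAt (fun s : ℝ => (s:ℂ) * z) z t := by
      have h := (Complex.ofRealCLM.hasDerivAt (x := t)).mul_const z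
      exact h.congr_deriv (by simp)
    have h5 := (h2.div_const 2).sub h4
    refine h5.congr_deriv ?_
    have hch : Complex.cosh (2 * (t:ℂ) * z) = 2 * Complex.sinh ((t:ℂ) * z) ^ 2 + 1 := by
      have h6 := Complex.cosh_two_mul ((t:ℂ) * z)
      have h7 := Complex.cosh_sq ((t:ℂ) * z)
      rw [show (2 * (t:ℂ) * z) = 2 * ((t:ℂ) * z) by ring]
      rw [h6, h7]; ring
    rw [hch]; ring
  have hcont : Continuous fun t : ℝ => 2 * z * Complex.sinh (t * z) ^ 2 := by
    fun_prop
  rw [intervalIntegral.integral_eq_sub_of_hasDerivAt (fun t _ => hF t)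
    (hcont.intervalIntegrable 0 1)]
  push_cast
  rw [show ((2:ℂ) * 1 * z) = 2 * z by ring]
  rw [Complex.sinh_two_mul]
  simp
  try ring

lemma part2_core (z : ℂ) (him : |z.im| ≤ π/2) :
    ‖Complex.sinh z * Complex.cosh z - z‖
      ≤ ‖z‖ * (Real.sinh z.re ^ 2 + Real.sin z.im ^ 2) := by
  rw [key_int z]
  have step1 : ‖∫ t in (0:ℝ)..1, 2 * z * Complex.sinh (t * z) ^ 2‖
      ≤ ∫ t in (0:ℝ)..1, 2 * ‖z‖ * (Real.sinh (t * z.re) ^ 2 + Real.sin (t * z.im) ^ 2) := by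
    have h1 : ‖∫ t in (0:ℝ)..1, 2 * z * Complex.sinh (t * z) ^ 2‖
        ≤ ∫ t in (0:ℝ)..1, ‖2 * z * Complex.sinh (t * z) ^ 2‖ := by
      exact intervalIntegral.norm_integral_le_integral_norm (by norm_num)
    have h2 : ∀ t : ℝ, ‖2 * z * Complex.sinh (t * z) ^ 2‖
        = 2 * ‖z‖ * (Real.sinh (t * z.re) ^ 2 + Real.sin (t * z.im) ^ 2) := by
      intro t
      rw [norm_mul, norm_mul, norm_pow, abs_sinh_sq]
      simp
      try ring
    rw [intervalIntegral.integral_congr (fun t _ => h2 t)] at h1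
    exact h1
  have hs : IntervalIntegrable (fun t : ℝ => Real.sinh (t * z.re) ^ 2) MeasureTheory.volume 0 1 := by
    apply Continuous.intervalIntegrable; fun_prop
  have hsi : IntervalIntegrable (fun t : ℝ => Real.sin (t * z.im) ^ 2) MeasureTheory.volume 0 1 := by
    apply Continuous.intervalIntegrable; fun_prop
  have step2 : (∫ t in (0:ℝ)..1, 2 * ‖z‖ * (Real.sinh (t * z.re) ^ 2 + Real.sin (t * z.im) ^ 2))
      = 2 * ‖z‖ * ((∫ t in (0:ℝ)..1, Real.sinh (t * z.re) ^ 2)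
        + ∫ t in (0:ℝ)..1, Real.sin (t * z.im) ^ 2) := by
    rw [← intervalIntegral.integral_add hs hsi, ← intervalIntegral.integral_const_mul]
  have step3 := I1 z.re
  have step4 := I2 z.im him
  have habs : (0:ℝ) ≤ ‖z‖ := norm_nonneg z
  calc ‖∫ t in (0:ℝ)..1, 2 * z * Complex.sinh (t * z) ^ 2‖
      ≤ 2 * ‖z‖ * ((∫ t in (0:ℝ)..1, Real.sinh (t * z.re) ^ 2)
        + ∫ t in (0:ℝ)..1, Real.sin (t * z.im) ^ 2) := by rw [← step2]; exact step1
    _ ≤ 2 * ‖z‖ * (Real.sinh z.re ^ 2 / 2 + Real.sin z.im ^ 2 / 2) := by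
        apply mul_le_mul_of_nonneg_left (by linarith) (by positivity)
    _ = ‖z‖ * (Real.sinh z.re ^ 2 + Real.sin z.im ^ 2) := by ring

theorem stmt_9 :
    (∀ z : ℂ, z ≠ 0 → |z.im| ≤ π / 4 →
      ‖Complex.cosh z / Complex.sinh z - z / Complex.sinh z ^ 2‖ < 1)
    ∧
    (∀ z : ℂ, z ≠ 0 → |z.im| ≤ π / 2 →
      ‖Complex.cosh z / Complex.sinh z - z / Complex.sinh z ^ 2‖
        ≤ ‖z‖) := by
  constructor
  · intro z hz him
    have hne : Complex.sinh z ≠ 0 := sinh_ne_zero' z hz (by linarith [Real.pi_pos])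
    have hrw : Complex.cosh z / Complex.sinh z - z / Complex.sinh z ^ 2
        = (Complex.sinh z * Complex.cosh z - z) / Complex.sinh z ^ 2 := by
      field_simp
    rw [hrw, norm_div, norm_pow]
    rw [div_lt_one (pow_pos (norm_pos_iff.2 hne) 2)]
    exact part1_core z hz him
  · intro z hz him
    have hne : Complex.sinh z ≠ 0 := sinh_ne_zero' z hz him
    have hrw : Complex.cosh z / Complex.sinh z - z / Complex.sinh z ^ 2
        = (Complex.sinh z * Complex.cosh z - z) / Complex.sinh z ^ 2 := by
      field_simp
    rw [hrw, norm_div, norm_pow]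
    rw [div_le_iff₀ (pow_pos (norm_pos_iff.2 hne) 2)]
    calc ‖Complex.sinh z * Complex.cosh z - z‖
        ≤ ‖z‖ * (Real.sinh z.re ^ 2 + Real.sin z.im ^ 2) := part2_core z him
      _ = ‖z‖ * ‖Complex.sinh z‖ ^ 2 := by rw [abs_sinh_sq]
end
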